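/- Let R and R_d be real 3×3 matrices with RᵀR = I, det R = 1, R_dᵀR_d = I, det R_d = 1. Let k ∈ ℝ³ be a nonzero vector such that R_d·e₃ = k/‖k‖, where e₃ = (0,0,1). Set b := R·e₃ and e_vec := k − ⟨b, k⟩·b. Then (‖k‖²/2)·trace(I − Rᵀ·R_d) ≥ (1/2)·‖e_vec‖², where ⟨·,·⟩ and ‖·‖ are the Euclidean inner product and norm on ℝ³. -/

import Mathlib

open Matrix RealInnerProductSpace

/-- Key SO(3) fact: `Q 0 0 + Q 1 1 ≤ 1 + Q 2 2` for any special orthogonal `Q`. -/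
lemma so3_key_aux (Q : Matrix (Fin 3) (Fin 3) ℝ) (h1 : Qᵀ * Q = 1) (h2 : Q.det = 1) :
    Q 0 0 + Q 1 1 ≤ 1 + Q 2 2 := by
  have h1' : Q * Qᵀ = 1 := mul_eq_one_comm.mp h1
  have hadj : Q.adjugate = Qᵀ := by
    calc Q.adjugate = Q.adjugate * (Q * Qᵀ) := by rw [h1', mul_one]
    _ = (Q.adjugate * Q) * Qᵀ := by rw [← mul_assoc]
    _ = Qᵀ := by rw [Matrix.adjugate_mul, h2, one_smul, one_mul]
  have hcof : Q 0 0 * Q 1 1 - Q 0 1 * Q 1 0 = Q 2 2 := by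
    have h := congrFun (congrFun hadj 2) 2
    rw [Matrix.adjugate_fin_three] at h
    simpa using h
  have e00 := congrFun (congrFun h1' 0) 0
  have e11 := congrFun (congrFun h1' 1) 1
  have e01 := congrFun (congrFun h1' 0) 1
  simp [Matrix.mul_apply, Fin.sum_univ_three, Matrix.one_apply] at e00 e11 e01
  have key : ((1 - Q 0 0) * (1 - Q 1 1) - Q 0 1 * Q 1 0) ^ 2
      + ((1 - Q 0 0) * Q 1 2 + Q 0 2 * Q 1 0) ^ 2
      + (Q 0 1 * Q 1 2 + Q 0 2 * (1 - Q 1 1)) ^ 2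
      = (2 - 2 * Q 0 0) * (2 - 2 * Q 1 1) - (Q 0 1 + Q 1 0) ^ 2 := by
    linear_combination
      ((1 - 2 * Q 1 1 + Q 1 1 * Q 1 1 + Q 1 0 * Q 1 0) +
        (Q 1 2 * Q 1 2 - (Q 1 0 * Q 1 0 + Q 1 1 * Q 1 1 + Q 1 2 * Q 1 2 - 1))) * e00 +
      ((1 + Q 0 1 * Q 0 1 - 2 * Q 0 0 + Q 0 0 * Q 0 0) + Q 0 2 * Q 0 2) * e11 +
      ((2 * Q 1 0 + 2 * Q 0 1 - 2 * Q 0 1 * Q 1 1 - 2 * Q 0 0 * Q 1 0) +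
        ((Q 0 0 * Q 1 0 + Q 0 1 * Q 1 1 + Q 0 2 * Q 1 2) - 2 * Q 0 2 * Q 1 2)) * e01
  nlinarith [key, hcof, sq_nonneg (Q 0 1 - Q 1 0),
    sq_nonneg ((1 - Q 0 0) * Q 1 2 + Q 0 2 * Q 1 0),
    sq_nonneg (Q 0 1 * Q 1 2 + Q 0 2 * (1 - Q 1 1))]

/-- the appendix Lemma: the geometric tracking Lyapunov function
`(‖k‖²/2)·trace (I − Rᵀ R_d)` is lower bounded by half the squared norm of the
component of `k` orthogonal to the body z-axis `b = R e₃`. -/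
theorem stmt_11 (R Rd : Matrix (Fin 3) (Fin 3) ℝ)
    (hR1 : Rᵀ * R = 1) (hR2 : R.det = 1)
    (hRd1 : Rdᵀ * Rd = 1) (hRd2 : Rd.det = 1)
    (k : EuclideanSpace ℝ (Fin 3)) (hk : k ≠ 0)
    (halign : (WithLp.equiv 2 (Fin 3 → ℝ)).symm (Rd.mulVec ![0, 0, 1]) = ‖k‖⁻¹ • k)
    (b : EuclideanSpace ℝ (Fin 3))
    (hb : b = (WithLp.equiv 2 (Fin 3 → ℝ)).symm (R.mulVec ![0, 0, 1]))
    (evec : EuclideanSpace ℝ (Fin 3)) (hevec : evec = k - ⟪b, k⟫ • b) :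
    (‖k‖ ^ 2 / 2) * (1 - Rᵀ * Rd).trace ≥ (1 / 2) * ‖evec‖ ^ 2 := by
  have hn : (0:ℝ) < ‖k‖ := norm_pos_iff.mpr hk
  set Q := Rᵀ * Rd with hQdef
  -- Q is special orthogonal
  have hRR : R * Rᵀ = 1 := mul_eq_one_comm.mp hR1
  have hQ1 : Qᵀ * Q = 1 := by
    rw [hQdef, Matrix.transpose_mul, Matrix.transpose_transpose]
    calc Rdᵀ * R * (Rᵀ * Rd) = Rdᵀ * (R * Rᵀ) * Rd := by
          rw [Matrix.mul_assoc, Matrix.mul_assoc, Matrix.mul_assoc]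
    _ = 1 := by rw [hRR, Matrix.mul_one, hRd1]
  have hQ2 : Q.det = 1 := by
    rw [hQdef, Matrix.det_mul, Matrix.det_transpose, hR2, hRd2, one_mul]
  -- coordinates
  have hbi : ∀ i, b i = R i 2 := by
    intro i
    simp [hb, Matrix.mulVec, dotProduct, Fin.sum_univ_three]
  have hki : ∀ i, k i = ‖k‖ * Rd i 2 := by
    intro i
    have h2 := congrFun (congrArg (WithLp.equiv 2 (Fin 3 → ℝ)) halign) i
    simp [Matrix.mulVec, dotProduct, Fin.sum_univ_three] at h2
    field_simp at h2
    linarith [h2]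
  -- Q entries
  have hQii : ∀ i j, Q i j = R 0 i * Rd 0 j + R 1 i * Rd 1 j + R 2 i * Rd 2 j := by
    intro i j
    simp [hQdef, Matrix.mul_apply, Fin.sum_univ_three]
  -- b is a unit vector
  have hbb : ⟪b, b⟫ = 1 := by
    have e := congrFun (congrFun hR1 2) 2
    simp [Matrix.mul_apply, Fin.sum_univ_three, Matrix.one_apply] at e
    simp only [PiLp.inner_apply, RCLike.inner_apply, Fin.sum_univ_three, hbi, conj_trivial]
    linarith [e]
  -- inner product ⟪b, k⟫
  have hbk : ⟪b, k⟫ = ‖k‖ * Q 2 2 := by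
    simp [PiLp.inner_apply, RCLike.inner_apply, Fin.sum_univ_three, hbi, hki, hQii]
    ring
  -- squared norm of the error
  have hev : ‖evec‖ ^ 2 = ‖k‖ ^ 2 - ⟪b, k⟫ ^ 2 := by
    have : ‖evec‖ ^ 2 = ⟪evec, evec⟫ := (real_inner_self_eq_norm_sq evec).symm
    rw [this, hevec]
    simp only [inner_sub_left, inner_sub_right, real_inner_smul_left, real_inner_smul_right]
    rw [hbb, real_inner_comm k b]
    have hkk : ⟪k, k⟫ = ‖k‖ ^ 2 := real_inner_self_eq_norm_sq k
    rw [hkk]; ring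
  -- trace
  have htr : (1 - Q).trace = 3 - (Q 0 0 + Q 1 1 + Q 2 2) := by
    simp [Matrix.trace, Matrix.diag, Fin.sum_univ_three, Matrix.sub_apply, Matrix.one_apply]
  -- |Q 2 2| ≤ 1
  have hcol := congrFun (congrFun hQ1 2) 2
  simp [Matrix.mul_apply, Fin.sum_univ_three, Matrix.one_apply] at hcol
  have hkey := so3_key_aux Q hQ1 hQ2
  rw [htr, hev, hbk]
  nlinarith [hkey, hcol, sq_nonneg (Q 2 2), sq_nonneg (1 - Q 2 2), sq_nonneg ‖k‖,
    mul_pos hn hn, sq_nonneg (‖k‖ * (1 - Q 2 2)), sq_nonneg (‖k‖ * Q 2 2)]
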